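/- Fix m ≥ 1 and let s̄^{(m)} be the alternating element of Λ^m defined by s̄^{(m)}_1 = 1 and s̄^{(m)}_k − s̄^{(m)}_{k−1} = −(s̄^{(m)}_{k−1} − s̄^{(m)}_{k−2}) for 2 ≤ k ≤ m (so s̄^{(m)} = (0,1,0,1,…)). Then for every s ∈ Λ^m with s ≠ s̄^{(m)}, there exist integers b_1, b_2, …, b_p ∈ {0, 1, 2} such that s̄^{(m)} = Θ^{b_p} Θ^{b_{p−1}} ⋯ Θ^{b_1}(s). -/

import Mathlib

open MeasureTheory ProbabilityTheory Filter Finset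
open scoped ENNReal NNReal

noncomputable section

/-- Reflection of a discrete path at level `a`:
`Θ^a(s)_n = ∑_{k=1}^n (1_{k ≤ T_a(s)} - 1_{k > T_a(s)}) (s_k - s_{k-1})`,
where `k ≤ T_a(s)` iff `s_j ≠ a` for every `j < k`. -/
def reflect (a : ℤ) (s : ℕ → ℤ) : ℕ → ℤ := fun n =>
  ∑ k ∈ Finset.range n, if ∀ j ≤ k, s j ≠ a then s (k + 1) - s k else s k - s (k + 1)

/-- Iterated reflections: `reflectSeq [a₁, …, a_k] s = Θ^{a_k} Θ^{a_{k-1}} ⋯ Θ^{a₁}(s)`. -/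
def reflectSeq (L : List ℤ) (s : ℕ → ℤ) : ℕ → ℤ :=
  L.foldl (fun t a => reflect a t) s

/-- `s` belongs to `Λ^m`: `s_0 = 0` and `s_k - s_{k-1} ∈ {-1, +1}` for `1 ≤ k ≤ m`.
(Only the coordinates `s_0, …, s_m` are relevant.) -/
def InLambda (m : ℕ) (s : ℕ → ℤ) : Prop :=
  s 0 = 0 ∧ ∀ k < m, s (k + 1) - s k = 1 ∨ s (k + 1) - s k = -1


/-- The alternating path `s̄^(m) = (0, 1, 0, 1, …)`, i.e. `s̄_n = n mod 2`. -/
def sbar : ℕ → ℤ := fun n => (n % 2 : ℕ)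

/-! ### Auxiliary machinery -/

lemma sbar_zero : sbar 0 = 0 := by simp [sbar]

lemma sbar_zero_or_one (n : ℕ) : sbar n = 0 ∨ sbar n = 1 := by
  unfold sbar
  rcases Nat.mod_two_eq_zero_or_one n with h | h <;> simp [h]

lemma parity (j : ℕ) :
    ((j+2) % 2 = 1 ∧ sbar (j+1) = 0 ∧ sbar (j+2) = 1) ∨
    ((j+2) % 2 = 0 ∧ sbar (j+1) = 1 ∧ sbar (j+2) = 0) := by
  have h : ((j+1) % 2 = 0 ∧ (j+2) % 2 = 1) ∨ ((j+1) % 2 = 1 ∧ (j+2) % 2 = 0) := by omega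
  unfold sbar
  rcases h with ⟨a, b⟩ | ⟨a, b⟩
  · exact Or.inl ⟨b, by rw [a]; simp, by rw [b]; simp⟩
  · exact Or.inr ⟨b, by rw [a]; simp, by rw [b]; simp⟩

lemma sbar_cases (j : ℕ) :
    (sbar j = 0 ∧ sbar (j+1) = 1) ∨ (sbar j = 1 ∧ sbar (j+1) = 0) := by
  have h : (j % 2 = 0 ∧ (j+1) % 2 = 1) ∨ (j % 2 = 1 ∧ (j+1) % 2 = 0) := by omega
  unfold sbar
  rcases h with ⟨a, b⟩ | ⟨a, b⟩
  · exact Or.inl ⟨by rw [a]; simp, by rw [b]; simp⟩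
  · exact Or.inr ⟨by rw [a]; simp, by rw [b]; simp⟩

lemma reflect_succ (a : ℤ) (s : ℕ → ℤ) (n : ℕ) :
    reflect a s (n+1) = reflect a s n +
      (if ∀ j ≤ n, s j ≠ a then s (n+1) - s n else s n - s (n+1)) := by
  simp [reflect, Finset.sum_range_succ]

/-- Core lemma: if `t` first hits `a` at time `T`, then `Θ^a t` coincides with `t` up to
time `T` and is the mirror image `2a - t` afterwards. -/
lemma reflect_eq (a : ℤ) (t : ℕ → ℤ) (T : ℕ) (h0 : t 0 = 0) (hT : t T = a)
    (hlt : ∀ k < T, t k ≠ a) :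
    ∀ n, reflect a t n = if n ≤ T then t n else 2 * a - t n := by
  have hcond : ∀ k : ℕ, (∀ j ≤ k, t j ≠ a) ↔ k < T := by
    intro k
    constructor
    · intro hk
      by_contra hk'
      exact hk T (by omega) hT
    · intro hk j hj
      exact hlt j (lt_of_le_of_lt hj hk)
  intro n
  induction n with
  | zero =>
    rw [if_pos (Nat.zero_le T), h0]
    simp [reflect]
  | succ n ih =>
    rw [reflect_succ, ih]
    by_cases hn : n < T
    · rw [if_pos ((hcond n).mpr hn), if_pos (le_of_lt hn), if_pos (by omega)]
      ring
    · rw [if_neg (fun hh => hn ((hcond n).mp hh))]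
      by_cases h2 : n ≤ T
      · have hnT : n = T := by omega
        subst hnT
        rw [if_pos le_rfl, if_neg (by omega), hT]
        ring
      · rw [if_neg h2, if_neg (by omega)]
        ring

lemma reflect_zero_level {s : ℕ → ℤ} (h0 : s 0 = 0) : ∀ n, reflect 0 s n = -s n := by
  intro n
  have := reflect_eq 0 s 0 h0 h0 (fun k hk => absurd hk (by omega)) n
  rw [this]
  rcases Nat.eq_zero_or_pos n with rfl | hn
  · simp [h0]
  · rw [if_neg (by omega)]; ring

lemma reflectSeq_nil (s : ℕ → ℤ) : reflectSeq [] s = s := rfl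

lemma reflectSeq_append (L1 L2 : List ℤ) (s : ℕ → ℤ) :
    reflectSeq (L1 ++ L2) s = reflectSeq L2 (reflectSeq L1 s) :=
  List.foldl_append

/-- The middle word used in the recursion for `rho`. -/
def mid (n : ℕ) : List ℤ := if n % 2 = 0 then [2] else [0, 1, 0]

/-- `rho j` is a word in the alphabet `{0,1,2}` which, applied to any path agreeing with
`s̄` on `[0, j]`, flips all increments from index `j` on. -/
def rho : ℕ → List ℤ
  | 0 => [0]
  | 1 => [1]
  | (j+2) => rho (j+1) ++ mid (j+2) ++ rho (j+1)

lemma rho_mem : ∀ j, ∀ a ∈ rho j, a = 0 ∨ a = 1 ∨ a = 2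
  | 0 => by intro a ha; simp [rho] at ha; tauto
  | 1 => by intro a ha; simp [rho] at ha; tauto
  | (j+2) => by
    intro a ha
    rw [rho] at ha
    rcases List.mem_append.mp ha with h | h
    · rcases List.mem_append.mp h with h' | h'
      · exact rho_mem (j+1) a h'
      · unfold mid at h'
        split at h' <;> simp at h' <;> tauto
    · exact rho_mem (j+1) a h

theorem rho_spec : ∀ (j : ℕ) (s : ℕ → ℤ), (∀ k ≤ j, s k = sbar k) →
    ∀ n, reflectSeq (rho j) s n = if n ≤ j then s n else 2 * sbar j - s n
  | 0, s, h, n => by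
    have h0 : s 0 = 0 := by rw [h 0 le_rfl, sbar_zero]
    show reflect 0 s n = _
    rw [reflect_zero_level h0 n]
    rcases Nat.eq_zero_or_pos n with rfl | hn
    · rw [if_pos le_rfl, h0]; ring
    · rw [if_neg (by omega), sbar_zero]; ring
  | 1, s, h, n => by
    have h0 : s 0 = 0 := by rw [h 0 (by omega), sbar_zero]
    have h1 : s 1 = 1 := by
      rw [h 1 le_rfl]; unfold sbar; norm_num
    have key := reflect_eq 1 s 1 h0 h1
      (fun k hk => by
        have : k = 0 := by omega
        rw [this, h0]; omega)
    show reflect 1 s n = _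
    rw [key n]
    have hs1 : sbar 1 = 1 := by unfold sbar; norm_num
    by_cases hn : n ≤ 1
    · rw [if_pos hn, if_pos hn]
    · rw [if_neg hn, if_neg hn, hs1]
  | (j+2), s, h, n => by
    have h1 : ∀ k ≤ j+1, s k = sbar k := fun k hk => h k (by omega)
    have hs0 : s 0 = 0 := by rw [h 0 (by omega), sbar_zero]
    set t := reflectSeq (rho (j+1)) s with ht
    have hT : ∀ n, t n = if n ≤ j+1 then s n else 2 * sbar (j+1) - s n :=
      rho_spec (j+1) s h1
    have ht0 : t 0 = 0 := by rw [hT 0, if_pos (by omega), hs0]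
    have htk : ∀ k ≤ j+1, t k = sbar k := fun k hk => by
      rw [hT k, if_pos hk]; exact h1 k hk
    have ht2 : t (j+2) = 2 * sbar (j+1) - sbar (j+2) := by
      rw [hT (j+2), if_neg (by omega), h (j+2) le_rfl]
    have hmid : ∀ n, reflectSeq (mid (j+2)) t n =
        if n ≤ j+2 then t n else 2 * (2 * sbar (j+1) - sbar (j+2)) - t n := by
      rcases parity j with ⟨hp, e1, e2⟩ | ⟨hp, e1, e2⟩
      · -- odd case: mid = [0,1,0]
        intro n
        have hmid_eq : mid (j+2) = [0, 1, 0] := by simp [mid, hp]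
        rw [hmid_eq]
        have e0 : ∀ k, reflect 0 t k = -t k := reflect_zero_level ht0
        have hu10 : reflect 0 t 0 = 0 := by rw [e0, ht0]; ring
        have hu1T : reflect 0 t (j+2) = 1 := by rw [e0, ht2, e1, e2]; ring
        have hu1lt : ∀ k < j+2, reflect 0 t k ≠ 1 := by
          intro k hk
          rw [e0, htk k (by omega)]
          rcases sbar_zero_or_one k with h' | h' <;> rw [h'] <;> omega
        have e2' := reflect_eq 1 (reflect 0 t) (j+2) hu10 hu1T hu1lt
        have hu20 : reflect 1 (reflect 0 t) 0 = 0 := by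
          rw [e2' 0, if_pos (by omega), hu10]
        have e3 : ∀ k, reflect 0 (reflect 1 (reflect 0 t)) k =
            -(reflect 1 (reflect 0 t)) k := reflect_zero_level hu20
        show reflect 0 (reflect 1 (reflect 0 t)) n = _
        rw [e3 n, e2' n]
        by_cases hn : n ≤ j+2
        · rw [if_pos hn, if_pos hn, e0]; ring
        · rw [if_neg hn, if_neg hn, e0, e1, e2]; ring
      · -- even case: mid = [2]
        intro n
        have hmid_eq : mid (j+2) = [2] := by simp [mid, hp]
        rw [hmid_eq]
        have hlt : ∀ k < j+2, t k ≠ 2 := by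
          intro k hk
          rw [htk k (by omega)]
          rcases sbar_zero_or_one k with h' | h' <;> rw [h'] <;> omega
        have hT2 : t (j+2) = 2 := by rw [ht2, e1, e2]; ring
        have key := reflect_eq 2 t (j+2) ht0 hT2 hlt n
        show reflect 2 t n = _
        rw [key, e1, e2]
        by_cases hn : n ≤ j+2
        · rw [if_pos hn, if_pos hn]
        · rw [if_neg hn, if_neg hn]; ring
    have hnew : ∀ k ≤ j+1, reflectSeq (mid (j+2)) t k = sbar k := fun k hk => by
      rw [hmid k, if_pos (by omega)]; exact htk k hk
    have hfin := rho_spec (j+1) (reflectSeq (mid (j+2)) t) hnew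
    have hre : reflectSeq (rho (j+2)) s =
        reflectSeq (rho (j+1)) (reflectSeq (mid (j+2)) t) := by
      rw [ht, rho, reflectSeq_append, reflectSeq_append]
    rw [hre, hfin n]
    by_cases hn1 : n ≤ j+1
    · rw [if_pos hn1, hmid n, if_pos (by omega), hT n, if_pos hn1, if_pos (by omega)]
    · rw [if_neg hn1, hmid n]
      by_cases hn2 : n ≤ j+2
      · have hn : n = j+2 := by omega
        subst hn
        rw [if_pos le_rfl, if_pos le_rfl, ht2, h (j+2) le_rfl]
        ring
      · rw [if_neg hn2, hT n, if_neg hn1, if_neg (by omega)]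
        ring

lemma inlambda_reflect (m : ℕ) (a : ℤ) (s : ℕ → ℤ) (h : InLambda m s) :
    InLambda m (reflect a s) := by
  constructor
  · simp [reflect]
  · intro k hk
    have hd := h.2 k hk
    rw [reflect_succ]
    split <;> omega

lemma inlambda_reflectSeq (m : ℕ) (L : List ℤ) (s : ℕ → ℤ) (h : InLambda m s) :
    InLambda m (reflectSeq L s) := by
  induction L generalizing s with
  | nil => exact h
  | cons a L ih => exact ih (reflect a s) (inlambda_reflect m a s h)

lemma main_induction (m : ℕ) : ∀ d : ℕ, ∀ s : ℕ → ℤ, InLambda m s →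
    (∀ k, k + d ≤ m → s k = sbar k) →
    ∃ L : List ℤ, (∀ a ∈ L, a = 0 ∨ a = 1 ∨ a = 2) ∧
      ∀ n ≤ m, reflectSeq L s n = sbar n := by
  intro d
  induction d with
  | zero =>
    intro s hs h
    exact ⟨[], by simp, fun n hn => by rw [reflectSeq_nil]; exact h n (by omega)⟩
  | succ d ih =>
    intro s hs h
    by_cases hc : s (m - d) = sbar (m - d)
    · refine ih s hs (fun k hk => ?_)
      by_cases h2 : k + d + 1 ≤ m
      · exact h k h2
      · have : k = m - d := by omega
        rw [this]; exact hc
    · have hs0 : s 0 = 0 := hs.1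
      have hmd : m - d ≠ 0 := fun h0 => hc (by rw [h0, hs0, sbar_zero])
      obtain ⟨j, hj⟩ : ∃ j, m - d = j + 1 := ⟨m - d - 1, by omega⟩
      have hdm : d < m := by omega
      have hm' : m = j + 1 + d := by omega
      have hpre : ∀ k ≤ j, s k = sbar k := fun k hk => h k (by omega)
      set t := reflectSeq (rho j) s with ht
      have hT : ∀ n, t n = if n ≤ j then s n else 2 * sbar j - s n := rho_spec j s hpre
      have hts : InLambda m t := inlambda_reflectSeq m (rho j) s hs
      have hstep := hs.2 j (by omega)
      have hsj : s j = sbar j := hpre j le_rfl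
      rw [hj] at hc
      have ht1 : t (j+1) = sbar (j+1) := by
        rw [hT (j+1), if_neg (by omega)]
        rcases sbar_cases j with ⟨e1, e2⟩ | ⟨e1, e2⟩ <;>
          rw [e1] at hsj <;> rw [e2] at hc ⊢ <;> omega
      have hnew : ∀ k, k + d ≤ m → t k = sbar k := by
        intro k hk
        have hk' : k ≤ j + 1 := by omega
        rcases Nat.lt_or_ge k (j+1) with h' | h'
        · rw [hT k, if_pos (by omega)]; exact hpre k (by omega)
        · have : k = j + 1 := by omega
          rw [this]; exact ht1
      obtain ⟨L', hL1, hL2⟩ := ih t hts hnew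
      refine ⟨rho j ++ L', ?_, ?_⟩
      · intro a ha
        rcases List.mem_append.mp ha with h' | h'
        · exact rho_mem j a h'
        · exact hL1 a h'
      · intro n hn
        rw [reflectSeq_append, ← ht]
        exact hL2 n hn

/-- **Reduction step in Lemma 1.** For every `s ∈ Λ^m` distinct from the alternating path
`s̄^(m) = (0,1,0,1,…)`, there are levels `b₁, …, b_p ∈ {0, 1, 2}` such that
`s̄^(m) = Θ^{b_p} Θ^{b_{p-1}} ⋯ Θ^{b₁}(s)`. -/
theorem exists_reflection_chain_to_alternating (m : ℕ) (hm : 1 ≤ m) (s : ℕ → ℤ)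
    (hs : InLambda m s) (hne : ∃ n ≤ m, s n ≠ sbar n) :
    ∃ L : List ℤ, (∀ a ∈ L, a = 0 ∨ a = 1 ∨ a = 2) ∧
      ∀ n ≤ m, reflectSeq L s n = sbar n := by
  refine main_induction m m s hs (fun k hk => ?_)
  have : k = 0 := by omega
  rw [this, hs.1, sbar_zero]
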